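/- Let A ⊆ B be commutative monoids (written additively, cancellative, torsion-free) such that B is the disjoint union of finitely many translates b₁ + A, …, b_r + A with b₁ = 0. Then for any commutative ring R, the monoid algebra R[B] is a free R[A]-module with basis X^{b₁}, …, X^{b_r}, and the trace of the R[A]-linear endomorphism 'multiplication by X^b' (b ∈ B) equals r·X^b if b ∈ A, and equals Σ over those j with b + b_j ∈ b_j + A of X^{b + b_j − b_j} in general; in particular if b + b_j ∈ b_j + A only when b ∈ A, the trace map Tr : R[B] → R[A] satisfies Tr(Σ_{b∈B} r_b X^b) = r · Σ_{a∈A} r_a X^a. -/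

import Mathlib

section Stmt10Aux

variable {R : Type*} [CommRing R] {V : Type*} [AddCancelCommMonoid V]
  {A B : AddSubmonoid V} {r : ℕ}

/-- The `R`-linear reindexing equivalence `(B →₀ R) ≃ (Fin r →₀ (A →₀ R))` coming from a
bijection `Fin r × A ≃ B`. -/
noncomputable def stmt10Repr (eB : (Fin r × A) ≃ B) :
    AddMonoidAlgebra R B ≃ₗ[R] (Fin r →₀ AddMonoidAlgebra R A) :=
  (AddMonoidAlgebra.coeffLinearEquiv R).trans ((Finsupp.domLCongr eB.symm).trans
    ((Finsupp.curryLinearEquiv R).trans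
      (Finsupp.mapRange.linearEquiv (AddMonoidAlgebra.coeffLinearEquiv R).symm)))

lemma stmt10Repr_apply (eB : (Fin r × A) ≃ B) (s : AddMonoidAlgebra R B)
    (j : Fin r) (a : A) : (stmt10Repr eB s j).coeff a = s.coeff (eB (j, a)) := by
  simp [stmt10Repr]

lemma stmt10Repr_single (eB : (Fin r × A) ≃ B) (j₀ : Fin r) (a₀ : A) (c : R) :
    stmt10Repr eB (AddMonoidAlgebra.single (eB (j₀, a₀)) c) =
      Finsupp.single j₀ (AddMonoidAlgebra.single a₀ c) := by
  classical
  ext j a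
  rw [stmt10Repr_apply]
  simp only [AddMonoidAlgebra.coeff_single]
  by_cases hj : j₀ = j
  · subst hj
    rw [Finsupp.single_eq_same]
    by_cases ha : a₀ = a
    · subst ha; simp
    · rw [AddMonoidAlgebra.coeff_single, Finsupp.single_eq_of_ne' ha,
        Finsupp.single_eq_of_ne' (fun hh => ha (congrArg Prod.snd (eB.injective hh)))]
  · rw [Finsupp.single_eq_of_ne' hj,
      Finsupp.single_eq_of_ne' (fun hh => hj (congrArg Prod.fst (eB.injective hh)))]
    simp

end Stmt10Aux

/-- (The saving trace on `q`-expansions, monoid-algebra core.)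
Let `A ⊆ B` be cancellative commutative monoids with `B` the disjoint union of finitely
many translates `b_1 + A, …, b_r + A`, `b_1 = 0`.  Then `R[B]` is free over `R[A]` with
basis the `X^{b_j}`, and if moreover `x + b_j ∈ b_j + A` happens only when `x ∈ A`, the
trace map `Tr : R[B] → R[A]` of this finite free extension satisfies
`Tr(Σ_{x ∈ B} r_x X^x) = r · Σ_{a ∈ A} r_a X^a`, i.e. coefficientwise
`(Tr f)(a) = r · f(a)` for all `a ∈ A`. -/
theorem stmt10 (R : Type*) [CommRing R] (V : Type*) [AddCancelCommMonoid V]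
    (A B : AddSubmonoid V) (hAB : A ≤ B) (r : ℕ) (hr : 0 < r)
    (b : Fin r → V) (hb : ∀ j, b j ∈ B) (hb0 : ∀ h : 0 < r, b ⟨0, h⟩ = 0)
    (hpart : ∀ x ∈ B, ∃! j : Fin r, ∃ a ∈ A, x = b j + a)
    (hcond : ∀ x ∈ B, ∀ j : Fin r, (∃ a ∈ A, x + b j = b j + a) → x ∈ A) :
    letI : Algebra (AddMonoidAlgebra R A) (AddMonoidAlgebra R B) :=
      (AddMonoidAlgebra.mapDomainRingHom R (AddSubmonoid.inclusion hAB)).toAlgebra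
    ∀ f : AddMonoidAlgebra R B, ∀ a : A,
      (Algebra.trace (AddMonoidAlgebra R A) (AddMonoidAlgebra R B) f).coeff a =
        r • f.coeff (AddSubmonoid.inclusion hAB a) := by
  intro f a
  letI inst : Algebra (AddMonoidAlgebra R A) (AddMonoidAlgebra R B) :=
    (AddMonoidAlgebra.mapDomainRingHom R (AddSubmonoid.inclusion hAB)).toAlgebra
  set ι : A →+ B := AddSubmonoid.inclusion hAB with hι
  -- the bijection `Fin r × A ≃ B`
  have hφbij : Function.Bijective
      (fun p : Fin r × A => (⟨b p.1 + p.2, B.add_mem (hb p.1) (hAB p.2.2)⟩ : B)) := by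
    constructor
    · rintro ⟨j, a₁⟩ ⟨j', a₂⟩ h
      have hv : b j + (a₁ : V) = b j' + (a₂ : V) := congrArg Subtype.val h
      obtain ⟨j₀, -, huniq⟩ := hpart (b j + (a₁ : V)) (B.add_mem (hb j) (hAB a₁.2))
      have hj : j = j' := by
        rw [huniq j ⟨a₁, a₁.2, rfl⟩, huniq j' ⟨a₂, a₂.2, hv⟩]
      subst hj
      have : (a₁ : V) = a₂ := add_left_cancel hv
      simp [Prod.ext_iff, Subtype.ext this]
    · rintro ⟨x, hx⟩
      obtain ⟨j, ⟨a₁, ha₁, hxa⟩, -⟩ := hpart x hx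
      exact ⟨⟨j, ⟨a₁, ha₁⟩⟩, by simp [← hxa]⟩
  set eB : (Fin r × A) ≃ B := Equiv.ofBijective _ hφbij with heBdef
  -- upgrade to an `R[A]`-linear equivalence giving a basis
  let reprP : AddMonoidAlgebra R B ≃ₗ[AddMonoidAlgebra R A] (Fin r →₀ AddMonoidAlgebra R A) :=
    { toFun := stmt10Repr eB
      invFun := (stmt10Repr (R := R) eB).symm
      left_inv := (stmt10Repr (R := R) eB).left_inv
      right_inv := (stmt10Repr (R := R) eB).right_inv
      map_add' := fun x y => map_add (stmt10Repr (R := R) eB) x y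
      map_smul' := by
        intro p s
        simp only [AddHom.toFun_eq_coe, AddHom.coe_mk, RingHom.id_apply]
        rw [Algebra.smul_def]
        have halg : algebraMap (AddMonoidAlgebra R A) (AddMonoidAlgebra R B) =
            AddMonoidAlgebra.mapDomainRingHom R ι := rfl
        rw [halg]
        induction p using AddMonoidAlgebra.induction_linear with
        | zero => simp
        | add p₁ p₂ h1 h2 =>
          simp only [map_add, add_mul, h1, h2, add_smul]
        | single a₁ c =>
          induction s using AddMonoidAlgebra.induction_linear with
          | zero => simp
          | add s₁ s₂ h1 h2 =>
            simp only [mul_add, map_add, h1, h2, smul_add]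
          | single x d =>
            obtain ⟨⟨j₀, a₀⟩, rfl⟩ := eB.surjective x
            have h1 : ι a₁ + eB (j₀, a₀) = eB (j₀, a₁ + a₀) := by
              apply Subtype.ext
              show (a₁ : V) + (b j₀ + a₀) = b j₀ + (a₁ + a₀)
              rw [add_left_comm]
            have h2 : AddMonoidAlgebra.mapDomainRingHom R ι (AddMonoidAlgebra.single a₁ c) =
                AddMonoidAlgebra.single (ι a₁) c := AddMonoidAlgebra.mapDomain_single
            rw [h2, AddMonoidAlgebra.single_mul_single, h1]
            rw [stmt10Repr_single, stmt10Repr_single]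
            show _ = AddMonoidAlgebra.single a₁ c •
              Finsupp.single j₀ (AddMonoidAlgebra.single a₀ d)
            rw [Finsupp.smul_single]
            congr 1
            exact ((smul_eq_mul _ _).trans (AddMonoidAlgebra.single_mul_single _ _ _ _)).symm }
  let basis : Module.Basis (Fin r) (AddMonoidAlgebra R A) (AddMonoidAlgebra R B) := Module.Basis.ofRepr reprP
  have hbasis : ∀ j : Fin r, basis j = AddMonoidAlgebra.single (⟨b j, hb j⟩ : B) 1 := by
    intro j
    apply reprP.injective
    have h0 : eB (j, (0 : A)) = (⟨b j, hb j⟩ : B) := Subtype.ext (by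
      show b j + ((0 : A) : V) = b j; simp)
    have h5 : reprP (AddMonoidAlgebra.single (⟨b j, hb j⟩ : B) 1) =
        Finsupp.single j (AddMonoidAlgebra.single 0 1) := by
      show stmt10Repr eB (AddMonoidAlgebra.single (⟨b j, hb j⟩ : B) 1) = _
      rw [← h0, stmt10Repr_single]
    have h6 : reprP (basis j) = Finsupp.single j 1 := basis.repr_self j
    rw [h5, h6]
    rfl
  classical
  -- compute the trace
  have hT : Algebra.trace (AddMonoidAlgebra R A) (AddMonoidAlgebra R B) f =
      ∑ j : Fin r, basis.repr (f * basis j) j := by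
    rw [Algebra.trace_eq_matrix_trace basis]
    exact Finset.sum_congr rfl fun j _ => Algebra.leftMulMatrix_eq_repr_mul basis f j j
  have hdiag : ∀ j : Fin r, (basis.repr (f * basis j) j).coeff a = f.coeff (ι a) := by
    intro j
    rw [hbasis j]
    have e1 : ((basis.repr (f * AddMonoidAlgebra.single (⟨b j, hb j⟩ : B) (1 : R))) j).coeff a =
        (f * AddMonoidAlgebra.single (⟨b j, hb j⟩ : B) (1 : R)).coeff (eB (j, a)) :=
      stmt10Repr_apply eB _ j a
    rw [e1]
    have H : ∀ z : B, z + (⟨b j, hb j⟩ : B) = eB (j, a) ↔ z = ι a := by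
      intro z
      constructor
      · intro hz
        have hzv : (z : V) + b j = b j + a := congrArg Subtype.val hz
        have : b j + (z : V) = b j + (a : V) := by rw [← add_comm (z : V) (b j), hzv]
        exact Subtype.ext (add_left_cancel this)
      · rintro rfl
        apply Subtype.ext
        show (a : V) + b j = b j + a
        exact add_comm _ _
    exact (AddMonoidAlgebra.coeff_mul_single_eq_coeff_mul (ι a) (fun z _ => H z)).trans (mul_one _)
  calc (Algebra.trace (AddMonoidAlgebra R A) (AddMonoidAlgebra R B) f).coeff a
      = (∑ j : Fin r, basis.repr (f * basis j) j).coeff a := by rw [hT]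
    _ = ∑ j : Fin r, (basis.repr (f * basis j) j).coeff a := by
        rw [AddMonoidAlgebra.coeff_sum, Finsupp.finset_sum_apply]
    _ = ∑ _j : Fin r, f.coeff (ι a) := Finset.sum_congr rfl fun j _ => hdiag j
    _ = r • f.coeff (ι a) := by rw [Finset.sum_const, Finset.card_univ, Fintype.card_fin]
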